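/- Let (G_n, δ_n)_{n∈ℕ} be a sequence of proper metric groups with identity elements e_n such that for all ε > 0 there exist ω > 0 and N ∈ ℕ with: for all n ≥ N and g, h ∈ G_n, δ_n(g,h) < ω implies δ_n(g⁻¹, h⁻¹) < ε. Suppose for each n ∈ ℕ there are ε_n > 0 with Σ_{n=0}^∞ ε_n < ∞ and a (1/ε_n)-local ε_n-almost isometric isomorphism (ς_n, κ_n) from (G_n,δ_n) to (G_{n+1},δ_{n+1}). For k > n set ς_n^k = ς_{k-1} ∘ ⋯ ∘ ς_n, and let H_∞ be the set of regular sequences (g_n)_{n∈ℕ} such that for every ε > 0 there exists N ∈ ℕ with δ_j(g_j, ς_n^j(g_n)) < ε for all n ≥ N and all j > n. Then H_∞ is closed under pointwise inverses: if (g_n)_{n∈ℕ} ∈ H_∞ then (g_n⁻¹)_{n∈ℕ} ∈ H_∞. -/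
import Mathlib


/-- `(ς, κ)` is an `r`-local `ε`-almost isometric isomorphism between the metric
monoids `G` and `H`. -/
def IsLocAlmostIsoIso {G H : Type*} [Monoid G] [MetricSpace G] [Monoid H] [MetricSpace H]
    (ς : G → H) (κ : H → G) (ε r : ℝ) : Prop :=
  ς 1 = 1 ∧ κ 1 = 1 ∧
    (∀ g ∈ Metric.closedBall (1 : G) r, ∀ g' ∈ Metric.closedBall (1 : G) r,
      ∀ h ∈ Metric.closedBall (1 : H) r,
        |dist (ς g * ς g') h - dist (g * g') (κ h)| ≤ ε) ∧
    (∀ g ∈ Metric.closedBall (1 : H) r, ∀ g' ∈ Metric.closedBall (1 : H) r,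
      ∀ h ∈ Metric.closedBall (1 : G) r,
        |dist (κ g * κ g') h - dist (g * g') (ς h)| ≤ ε)
/-- A sequence through a sequence of metric monoids is bounded when
`sup_n δ_n(e_n, g_n) < ∞`. -/
def BoundedSeq {G : ℕ → Type*} [∀ n, Monoid (G n)] [∀ n, MetricSpace (G n)]
    (g : ∀ n, G n) : Prop :=
  ∃ M : ℝ, ∀ n, dist (1 : G n) (g n) ≤ M

/-- A bounded sequence is regular when the right translations by its terms are
asymptotically uniformly equicontinuous. -/
def RegularSeq {G : ℕ → Type*} [∀ n, Monoid (G n)] [∀ n, MetricSpace (G n)]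
    (g : ∀ n, G n) : Prop :=
  BoundedSeq g ∧
    ∀ ε : ℝ, 0 < ε → ∃ ω : ℝ, 0 < ω ∧ ∃ N : ℕ, ∀ n, N ≤ n → ∀ h k : G n,
      dist h k < ω → dist (h * g n) (k * g n) < ε
/-- The compositions `ς_n^{n+k} = ς_{n+k-1} ∘ ⋯ ∘ ς_n`. -/
def compMap {G : ℕ → Type*} (ς : ∀ n, G n → G (n + 1)) (n : ℕ) :
    ∀ k : ℕ, G n → G (n + k)
  | 0 => fun g => g
  | k + 1 => fun g => ς (n + k) (compMap ς n k g)

/-- The map `ς_n^j = ς_{j-1} ∘ ⋯ ∘ ς_n : G_n → G_j` for `n ≤ j`. -/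
def sigmaComp {G : ℕ → Type*} (ς : ∀ n, G n → G (n + 1)) {n j : ℕ} (h : n ≤ j)
    (g : G n) : G j :=
  cast (congrArg G (Nat.add_sub_cancel' h)) (compMap ς n (j - n) g)

/-- Membership in `H_∞`: regular sequences which are asymptotically coherent with the
maps `ς`. -/
def MemHInf {G : ℕ → Type*} [∀ n, Monoid (G n)] [∀ n, MetricSpace (G n)]
    (ς : ∀ n, G n → G (n + 1)) (g : ∀ n, G n) : Prop :=
  RegularSeq g ∧
    ∀ ε : ℝ, 0 < ε → ∃ N : ℕ, ∀ n, N ≤ n → ∀ j : ℕ, ∀ hnj : n < j,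
      dist (g j) (sigmaComp ς hnj.le (g n)) < ε


section Blocks

lemma dist_one_inv' {G : Type*} [Group G] [MetricSpace G]
    (hleft : ∀ g h k : G, dist (g * h) (g * k) = dist h k) (x : G) :
    dist (1 : G) x⁻¹ = dist (1 : G) x := by
  have h := hleft x 1 x⁻¹
  rw [mul_one, mul_inv_cancel] at h
  rw [← h, dist_comm]

variable {G H : Type*} [Group G] [MetricSpace G] [Group H] [MetricSpace H]
  {ς : G → H} {κ : H → G} {e r : ℝ}

lemma blockA (hiso : IsLocAlmostIsoIso ς κ e r) (hr : 0 ≤ r) {x : G}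
    (hx : dist (1 : G) x ≤ r) : dist (1 : H) (ς x) ≤ dist (1 : G) x + e := by
  obtain ⟨h1, h2, hσ, -⟩ := hiso
  have key := hσ x (by simpa [Metric.mem_closedBall, dist_comm] using hx)
    1 (by simpa [Metric.mem_closedBall] using hr)
    1 (by simpa [Metric.mem_closedBall] using hr)
  rw [h1, h2, mul_one, mul_one] at key
  have key' := abs_le.mp key
  rw [dist_comm (1 : H), dist_comm (1 : G)]
  linarith [key'.1, key'.2]

lemma blockB (hiso : IsLocAlmostIsoIso ς κ e r) (hr : 0 ≤ r) {x : G} {y : H}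
    (hx : dist (1 : G) x ≤ r) (hy : dist (1 : H) y ≤ r) :
    dist (ς x) y ≤ dist x (κ y) + e := by
  obtain ⟨h1, -, hσ, -⟩ := hiso
  have key := hσ x (by simpa [Metric.mem_closedBall, dist_comm] using hx)
    1 (by simpa [Metric.mem_closedBall] using hr)
    y (by simpa [Metric.mem_closedBall, dist_comm] using hy)
  rw [h1, mul_one, mul_one] at key
  have key' := abs_le.mp key
  linarith [key'.1, key'.2]

lemma blockC (hiso : IsLocAlmostIsoIso ς κ e r) (hr : 0 ≤ r) {x : G}
    (hx : dist (1 : G) x ≤ r) (hsx : dist (1 : H) (ς x) ≤ r) :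
    dist (κ (ς x)) x ≤ e := by
  obtain ⟨-, h2, -, hκ⟩ := hiso
  have key := hκ (ς x) (by simpa [Metric.mem_closedBall, dist_comm] using hsx)
    1 (by simpa [Metric.mem_closedBall] using hr)
    x (by simpa [Metric.mem_closedBall, dist_comm] using hx)
  rw [h2, mul_one, mul_one, dist_self] at key
  have key' := abs_le.mp key
  linarith [key'.1, key'.2, dist_nonneg (x := κ (ς x)) (y := x)]

lemma blockD (hiso : IsLocAlmostIsoIso ς κ e r) (hr : 0 ≤ r)
    (hleftH : ∀ g h k : H, dist (g * h) (g * k) = dist h k) {x : G}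
    (hx : dist (1 : G) x ≤ r) (hx' : dist (1 : G) x⁻¹ ≤ r) :
    dist (ς x⁻¹) ((ς x)⁻¹) ≤ e := by
  obtain ⟨-, h2, hσ, -⟩ := hiso
  have key := hσ x (by simpa [Metric.mem_closedBall, dist_comm] using hx)
    x⁻¹ (by simpa [Metric.mem_closedBall, dist_comm] using hx')
    1 (by simpa [Metric.mem_closedBall] using hr)
  rw [h2, mul_inv_cancel, dist_self] at key
  have key' := abs_le.mp key
  calc dist (ς x⁻¹) ((ς x)⁻¹) = dist (ς x * ς x⁻¹) (ς x * (ς x)⁻¹) :=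
        (hleftH _ _ _).symm
    _ = dist (ς x * ς x⁻¹) 1 := by rw [mul_inv_cancel]
    _ ≤ e := by linarith [key'.1, key'.2, dist_nonneg (x := ς x * ς x⁻¹) (y := (1 : H))]

end Blocks

lemma sigmaComp_add {G : ℕ → Type*} (ς : ∀ n, G n → G (n + 1)) {n k : ℕ}
    (h : n ≤ n + k) (x : G n) : sigmaComp ς h x = compMap ς n k x := by
  apply eq_of_heq
  unfold sigmaComp
  refine HEq.trans (cast_heq _ _) ?_
  rw [Nat.add_sub_cancel_left]

theorem memHInf_inv
    (G : ℕ → Type*) [∀ n, Group (G n)] [∀ n, MetricSpace (G n)]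
    (h_left : ∀ n, ∀ g h k : G n, dist (g * h) (g * k) = dist h k)
    (h_cont : ∀ n, Continuous fun p : G n × G n => p.1 * p.2)
    (h_inv : ∀ n, Continuous fun g : G n => g⁻¹)
    (h_proper : ∀ n, ProperSpace (G n))
    (h_equi : ∀ ε : ℝ, 0 < ε → ∃ ω : ℝ, 0 < ω ∧ ∃ N : ℕ, ∀ n, N ≤ n →
      ∀ g h : G n, dist g h < ω → dist g⁻¹ h⁻¹ < ε)
    (ε : ℕ → ℝ) (hε : ∀ n, 0 < ε n)
    (ς : ∀ n, G n → G (n + 1)) (κ : ∀ n, G (n + 1) → G n)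
    (h_iso : ∀ n, IsLocAlmostIsoIso (ς n) (κ n) (ε n) (1 / ε n))
    (h_sum : Summable ε)
    (g : ∀ n, G n) (hg : MemHInf ς g) :
    MemHInf ς (fun n => (g n)⁻¹) := by
  obtain ⟨⟨⟨M, hM⟩, -⟩, hcoh⟩ := hg
  have hdoi : ∀ n (x : G n), dist (1 : G n) x⁻¹ = dist (1 : G n) x :=
    fun n x => dist_one_inv' (h_left n) x
  constructor
  · constructor
    · exact ⟨M, fun n => by simpa [hdoi n (g n)] using hM n⟩
    · intro ε₀ hε₀
      obtain ⟨ω₂, hω₂, N₂, hN₂⟩ := h_equi ε₀ hε₀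
      obtain ⟨ω₁, hω₁, N₁, hN₁⟩ := h_equi ω₂ hω₂
      refine ⟨ω₁, hω₁, max N₁ N₂, fun n hn h k hhk => ?_⟩
      have s1 : dist h⁻¹ k⁻¹ < ω₂ := hN₁ n (le_trans (le_max_left _ _) hn) h k hhk
      have s2 : dist (g n * h⁻¹) (g n * k⁻¹) < ω₂ := by rwa [h_left]
      have s3 : dist (g n * h⁻¹)⁻¹ (g n * k⁻¹)⁻¹ < ε₀ :=
        hN₂ n (le_trans (le_max_right _ _) hn) _ _ s2
      simpa [mul_inv_rev] using s3
  · -- coherence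
    intro ε' hε'
    -- constants
    have hM0 : 0 ≤ M := le_trans dist_nonneg (hM 0)
    set S := ∑' m, ε m with hSdef
    have hS0 : 0 ≤ S := tsum_nonneg fun m => (hε m).le
    have hεS : ∀ m, ε m ≤ S := fun m => Summable.le_tsum h_sum m fun j _ => (hε j).le
    set B := M + 2 * S + 1 with hBdef
    have hB0 : 0 < B := by positivity
    -- tail sums
    have hsumtail : ∀ n, Summable fun i => ε (n + i) := by
      intro n
      have := (summable_nat_add_iff n).mpr h_sum
      simpa [add_comm] using this
    have hps : ∀ n k, ∑ i ∈ Finset.range k, ε (n + i) ≤ ∑' i, ε (n + i) :=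
      fun n k => Summable.sum_le_tsum _ (fun i _ => (hε _).le) (hsumtail n)
    have hpsS : ∀ n k, ∑ i ∈ Finset.range k, ε (n + i) ≤ S := by
      intro n k
      refine (hps n k).trans ?_
      have h1 := Summable.sum_add_tsum_nat_add (f := ε) n h_sum
      have h2 : (0 : ℝ) ≤ ∑ i ∈ Finset.range n, ε i :=
        Finset.sum_nonneg fun i _ => (hε i).le
      have h3 : (∑' i, ε (n + i)) = ∑' i, ε (i + n) := tsum_congr fun i => by rw [add_comm]
      rw [h3]
      linarith
    have hps0 : ∀ n k, (0 : ℝ) ≤ ∑ i ∈ Finset.range k, ε (n + i) :=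
      fun n k => Finset.sum_nonneg fun i _ => (hε _).le
    -- the key induction
    have key : ∀ n, (∀ m, n ≤ m → B ≤ 1 / ε m) → ∀ k,
        dist (1 : G (n + k)) (compMap ς n k (g n)) ≤ M + ∑ i ∈ Finset.range k, ε (n + i) ∧
        dist (1 : G (n + k)) (compMap ς n k ((g n)⁻¹)) ≤ M + ∑ i ∈ Finset.range k, ε (n + i) ∧
        dist (compMap ς n k ((g n)⁻¹)) ((compMap ς n k (g n))⁻¹) ≤
          3 * ∑ i ∈ Finset.range k, ε (n + i) := by
      intro n hball k
      induction k with
      | zero =>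
          refine ⟨by simpa [compMap] using hM n, ?_, by simp [compMap]⟩
          simpa [compMap, hdoi n (g n)] using hM n
      | succ k ih =>
          obtain ⟨ih1, ih2, ih3⟩ := ih
          set m := n + k with hmdef
          set a := compMap ς n k (g n) with hadef
          set b := compMap ς n k ((g n)⁻¹) with hbdef
          have hSSk : ∑ i ∈ Finset.range k, ε (n + i) ≤ S := hpsS n k
          have hrm : (0 : ℝ) ≤ 1 / ε m := (one_div_pos.mpr (hε m)).le
          have hBm : B ≤ 1 / ε m := hball m (Nat.le_add_right _ _)
          have hεmS : ε m ≤ S := hεS m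
          have ha : dist (1 : G m) a ≤ 1 / ε m := by
            refine le_trans ih1 (le_trans ?_ hBm); rw [hBdef]; linarith
          have ha' : dist (1 : G m) a⁻¹ ≤ 1 / ε m := by rwa [hdoi m a]
          have hb : dist (1 : G m) b ≤ 1 / ε m := by
            refine le_trans ih2 (le_trans ?_ hBm); rw [hBdef]; linarith
          have hσa'bd : dist (1 : G (m + 1)) (ς m a⁻¹) ≤ dist (1 : G m) a⁻¹ + ε m :=
            blockA (h_iso m) hrm ha'
          have hσa' : dist (1 : G (m + 1)) (ς m a⁻¹) ≤ 1 / ε m := by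
            refine le_trans hσa'bd (le_trans ?_ hBm)
            rw [hdoi m a, hBdef]
            have := ih1
            linarith
          have hstep1 : dist (1 : G (m + 1)) (ς m a) ≤ dist (1 : G m) a + ε m :=
            blockA (h_iso m) hrm ha
          have hstep2 : dist (1 : G (m + 1)) (ς m b) ≤ dist (1 : G m) b + ε m :=
            blockA (h_iso m) hrm hb
          have hD : dist (ς m a⁻¹) ((ς m a)⁻¹) ≤ ε m :=
            blockD (h_iso m) hrm (h_left (m + 1)) ha ha'
          have hB' : dist (ς m b) (ς m a⁻¹) ≤ dist b (κ m (ς m a⁻¹)) + ε m :=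
            blockB (h_iso m) hrm hb hσa'
          have hC : dist (κ m (ς m a⁻¹)) a⁻¹ ≤ ε m := blockC (h_iso m) hrm ha' hσa'
          have htri1 : dist b (κ m (ς m a⁻¹)) ≤ dist b a⁻¹ + dist a⁻¹ (κ m (ς m a⁻¹)) :=
            dist_triangle _ _ _
          have htri2 : dist (ς m b) ((ς m a)⁻¹) ≤
              dist (ς m b) (ς m a⁻¹) + dist (ς m a⁻¹) ((ς m a)⁻¹) := dist_triangle _ _ _
          have hCc : dist a⁻¹ (κ m (ς m a⁻¹)) ≤ ε m := by rwa [dist_comm]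
          have hsum' : ∑ i ∈ Finset.range (k + 1), ε (n + i)
              = (∑ i ∈ Finset.range k, ε (n + i)) + ε (n + k) := Finset.sum_range_succ _ _
          refine ⟨?_, ?_, ?_⟩
          · show dist (1 : G (m + 1)) (ς m a) ≤ _
            rw [hsum']
            linarith
          · show dist (1 : G (m + 1)) (ς m b) ≤ _
            rw [hsum']
            linarith
          · show dist (ς m b) ((ς m a)⁻¹) ≤ _
            rw [hsum']
            linarith
    -- choose thresholds
    obtain ⟨ω, hω, N₁, hN₁⟩ := h_equi (ε' / 2) (by linarith)
    obtain ⟨N₂, hN₂⟩ := hcoh ω hω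
    have htail : Filter.Tendsto (fun i => ∑' k, ε (k + i)) Filter.atTop (nhds 0) :=
      tendsto_sum_nat_add ε
    obtain ⟨N₃, hN₃⟩ := (Metric.tendsto_atTop.mp htail) (ε' / 8) (by linarith)
    obtain ⟨N₄, hN₄⟩ := (Metric.tendsto_atTop.mp (h_sum.tendsto_atTop_zero)) (1 / B) (one_div_pos.mpr hB0)
    refine ⟨max (max N₁ N₂) (max N₃ N₄), fun n hn j hnj => ?_⟩
    have hnN₁ : N₁ ≤ n := le_trans (le_trans (le_max_left _ _) (le_max_left _ _)) hn
    have hnN₂ : N₂ ≤ n := le_trans (le_trans (le_max_right _ _) (le_max_left _ _)) hn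
    have hnN₃ : N₃ ≤ n := le_trans (le_trans (le_max_left _ _) (le_max_right _ _)) hn
    have hnN₄ : N₄ ≤ n := le_trans (le_trans (le_max_right _ _) (le_max_right _ _)) hn
    have hball : ∀ m, n ≤ m → B ≤ 1 / ε m := by
      intro m hm
      have h1 : ε m < 1 / B := by
        have := hN₄ m (le_trans hnN₄ hm)
        rw [Real.dist_eq, sub_zero, abs_of_pos (hε m)] at this
        exact this
      have h2 : 1 / (1 / B) < 1 / ε m := one_div_lt_one_div_of_lt (hε m) h1
      rw [one_div_one_div] at h2
      exact h2.le
    obtain ⟨k, rfl⟩ := Nat.exists_eq_add_of_le hnj.le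
    have hco := hN₂ n hnN₂ (n + k) hnj
    rw [sigmaComp_add] at hco
    have hinv1 : dist ((g (n + k))⁻¹) ((compMap ς n k (g n))⁻¹) < ε' / 2 :=
      hN₁ (n + k) (le_trans hnN₁ (Nat.le_add_right _ _)) _ _ hco
    have hinv2 : dist (compMap ς n k ((g n)⁻¹)) ((compMap ς n k (g n))⁻¹) ≤
        3 * ∑ i ∈ Finset.range k, ε (n + i) := (key n hball k).2.2
    have htails : ∑ i ∈ Finset.range k, ε (n + i) < ε' / 8 := by
      have h1 := hN₃ n hnN₃
      rw [Real.dist_eq, sub_zero, abs_of_nonneg (tsum_nonneg fun i => (hε _).le)] at h1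
      have h2 : (∑' i, ε (n + i)) = ∑' i, ε (i + n) := tsum_congr fun i => by rw [add_comm]
      have := hps n k
      rw [h2] at this
      linarith
    show dist ((g (n + k))⁻¹) (sigmaComp ς hnj.le ((g n)⁻¹)) < ε'
    rw [sigmaComp_add]
    calc dist ((g (n + k))⁻¹) (compMap ς n k ((g n)⁻¹))
        ≤ dist ((g (n + k))⁻¹) ((compMap ς n k (g n))⁻¹)
          + dist ((compMap ς n k (g n))⁻¹) (compMap ς n k ((g n)⁻¹)) := dist_triangle _ _ _
      _ < ε' := by rw [dist_comm ((compMap ς n k (g n))⁻¹)]; linarith
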